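/- For n = k²−k+1 and k ≥ 3, the quantity λ_3 = k·C(n−k−3, k−3) − (k−3)·C(n−k−2, k−3) equals ((2k²−3k−3)/(k²−3k+2))·C(n−k−3, k−3) and is positive for k ≥ 4 (and nonnegative for k = 3). -/
import Mathlib

theorem stmt_10 (k : ℕ) (hk : 3 ≤ k) :
    let n := k ^ 2 - k + 1
    let lam3 : ℤ := (k : ℤ) * Nat.choose (n - k - 3) (k - 3)
      - ((k : ℤ) - 3) * Nat.choose (n - k - 2) (k - 3)
    ((k : ℤ) ^ 2 - 3 * k + 2) * lam3
        = (2 * (k : ℤ) ^ 2 - 3 * k - 3) * Nat.choose (n - k - 3) (k - 3) ∧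
      (4 ≤ k → 0 < lam3) ∧ (k = 3 → 0 ≤ lam3) := by
  intro n lam3
  have hsq : k ^ 2 = k * k := sq k
  have hkk : 3 * k ≤ k * k := Nat.mul_le_mul_right k hk
  have hm : n - k - 3 + (2 * k + 2) = k * k := by simp only [n, hsq]; omega
  set m := n - k - 3 with hmdef
  have hm1 : n - k - 2 = m + 1 := by simp only [n, hsq] at hmdef ⊢; omega
  have hr : k - 3 ≤ m := by omega
  -- key nat identity
  have hkey : (m + 1).choose (k - 3) * (m + 1 - (k - 3)) = (m + 1) * m.choose (k - 3) := by
    rw [← Nat.choose_succ_right_eq, ← Nat.add_one_mul_choose_eq]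
  have ha : 0 < m.choose (k - 3) := Nat.choose_pos hr
  -- cast to ℤ
  have hmz : (m : ℤ) = (k : ℤ) ^ 2 - 2 * k - 2 := by
    have := congrArg (fun x : ℕ => (x : ℤ)) hm
    push_cast at this ⊢
    nlinarith [this]
  have hsub : (m + 1 - (k - 3) : ℕ) = (m + 1) - (k - 3) := rfl
  have hkeyz : ((m + 1).choose (k - 3) : ℤ) * ((m : ℤ) + 1 - ((k : ℤ) - 3))
      = ((m : ℤ) + 1) * m.choose (k - 3) := by
    have h3 : ((k : ℤ) - 3) = ((k - 3 : ℕ) : ℤ) := by push_cast [hk]; ring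
    rw [h3]
    have := congrArg (fun x : ℕ => (x : ℤ)) hkey
    push_cast [Nat.sub_le, hr, Nat.le_succ_of_le hr] at this ⊢
    linarith [this]
  have hkz : (3 : ℤ) ≤ (k : ℤ) := by exact_mod_cast hk
  have haz : (0 : ℤ) < m.choose (k - 3) := by exact_mod_cast ha
  have heq : ((k : ℤ) ^ 2 - 3 * k + 2) * lam3
      = (2 * (k : ℤ) ^ 2 - 3 * k - 3) * Nat.choose m (k - 3) := by
    simp only [lam3, hm1, ← hmdef]
    linear_combination (3 - (k : ℤ)) * hkeyz
      + ((3 - (k : ℤ)) * (Nat.choose m (k - 3) : ℤ)) * hmz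
      + (((k : ℤ) - 3) * (Nat.choose (m + 1) (k - 3) : ℤ)) * hmz
  have hc : (0 : ℤ) < (k : ℤ) ^ 2 - 3 * k + 2 := by nlinarith [hkz]
  have hd : (0 : ℤ) < 2 * (k : ℤ) ^ 2 - 3 * k - 3 := by nlinarith [hkz]
  have h2 : (0 : ℤ) < ((k : ℤ) ^ 2 - 3 * k + 2) * lam3 := by
    rw [heq]; exact mul_pos hd haz
  have hpos : (0 : ℤ) < lam3 := (mul_pos_iff_of_pos_left hc).mp h2
  exact ⟨heq, fun _ => hpos, fun _ => le_of_lt hpos⟩
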